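/- Assume the data {(X̃_i, Ỹ_i)}_{i=1}^n are i.i.d., the conditional distribution of Ỹ_i given X̃_i is continuous, R(w) = Σ_{j=1}^p λ_j w_j² with λ_j ≥ 0, each X̃_i = Z_i + ξ_i where ξ_i is independent of (Z_i, Ỹ_i) and has independent continuously distributed entries, and p < n. Then with probability one, every dual solution η̂ satisfies |{i : −(1−τ) < η̂_i < τ}| < n. -/

import Mathlib

open MeasureTheory ProbabilityTheory Filter Finset

noncomputable section

/-- The pinball (quantile) loss `ℓ_τ(r) = τ·r − min{r, 0}`. -/
def pinball (τ r : ℝ) : ℝ := τ * r - min r 0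

/-- The quantile-regression objective restricted to the samples in `S`:
`∑_{i ∈ S} ℓ_τ(Ỹ_i − X̃_iᵀ w) + R(w)`. -/
def primalObjS {n p : ℕ} (τ : ℝ) (X : Fin n → Fin p → ℝ) (Y : Fin n → ℝ)
    (R : (Fin p → ℝ) → ℝ) (S : Finset (Fin n)) (w : Fin p → ℝ) : ℝ :=
  ∑ i ∈ S, pinball τ (Y i - ∑ j, X i j * w j) + R w

/-- A primal solution of the quantile regression program over the samples in `S`. -/
def IsPrimalSolS {n p : ℕ} (τ : ℝ) (X : Fin n → Fin p → ℝ) (Y : Fin n → ℝ)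
    (R : (Fin p → ℝ) → ℝ) (S : Finset (Fin n)) (w : Fin p → ℝ) : Prop :=
  ∀ w', primalObjS τ X Y R S w ≤ primalObjS τ X Y R S w'

/-- The Lagrangian `L(w, r, η) = ∑_{i∈S} ℓ_τ(r_i) + ∑_{i∈S} η_i (Ỹ_i − X̃_iᵀw − r_i) + R(w)`
of the quantile regression over the samples in `S`. -/
def LagrS {n p : ℕ} (τ : ℝ) (X : Fin n → Fin p → ℝ) (Y : Fin n → ℝ)
    (R : (Fin p → ℝ) → ℝ) (S : Finset (Fin n)) (w : Fin p → ℝ) (r η : Fin n → ℝ) : ℝ :=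
  ∑ i ∈ S, pinball τ (r i) + ∑ i ∈ S, η i * (Y i - (∑ j, X i j * w j) - r i) + R w

/-- `((w, r), η)` is a saddle point of the Lagrangian over the samples in `S`.  By strong duality
this captures exactly the primal-dual optimal pairs. -/
def IsSaddleS {n p : ℕ} (τ : ℝ) (X : Fin n → Fin p → ℝ) (Y : Fin n → ℝ)
    (R : (Fin p → ℝ) → ℝ) (S : Finset (Fin n)) (w : Fin p → ℝ) (r η : Fin n → ℝ) : Prop :=
  (∀ w' r', LagrS τ X Y R S w r η ≤ LagrS τ X Y R S w' r' η) ∧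
  (∀ η', LagrS τ X Y R S w r η' ≤ LagrS τ X Y R S w r η)

/-- A dual solution of the quantile regression over the samples in `S`: the dual component of a
saddle point of the Lagrangian. -/
def IsDualSolS {n p : ℕ} (τ : ℝ) (X : Fin n → Fin p → ℝ) (Y : Fin n → ℝ)
    (R : (Fin p → ℝ) → ℝ) (S : Finset (Fin n)) (η : Fin n → ℝ) : Prop :=
  ∃ w r, IsSaddleS τ X Y R S w r η


attribute [local instance 10] Classical.propDecidable

/-! ### Auxiliary deterministic lemmas about saddle points -/

private lemma sum_update_eq' {n : ℕ} (F : Fin n → ℝ → ℝ) (v : Fin n → ℝ) (i : Fin n) (t : ℝ) :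
    ∑ k, F k (Function.update v i t k) = F i t + ∑ k ∈ Finset.univ.erase i, F k (v k) := by
  rw [← Finset.add_sum_erase _ _ (Finset.mem_univ i), Function.update_self]
  congr 1
  exact Finset.sum_congr rfl fun k hk =>
    congrArg _ (Function.update_of_ne (Finset.ne_of_mem_erase hk) _ _)

private lemma eq_zero_of_pinball_le' {τ r η : ℝ} (h1 : -(1 - τ) < η) (h2 : η < τ)
    (h : pinball τ r ≤ η * r) : r = 0 := by
  unfold pinball at h
  rcases lt_trichotomy r 0 with hr | hr | hr
  · rw [min_eq_left hr.le] at h; nlinarith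
  · exact hr
  · rw [min_eq_right hr.le] at h; nlinarith

/-- If `((w,r),η)` is a saddle point over all samples and every dual coordinate is strictly
between the bounds, then `w` interpolates all the data. -/
private lemma saddle_interp' {n p : ℕ} {τ : ℝ} {X : Fin n → Fin p → ℝ} {Y : Fin n → ℝ}
    {R : (Fin p → ℝ) → ℝ} {w : Fin p → ℝ} {r η : Fin n → ℝ}
    (hs : IsSaddleS τ X Y R Finset.univ w r η)
    (hint : ∀ i : Fin n, -(1 - τ) < η i ∧ η i < τ) (i : Fin n) :
    Y i = ∑ j, X i j * w j := by
  set c : Fin n → ℝ := fun k => Y k - (∑ j, X k j * w j) - r k with hc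
  have hL : ∀ t, LagrS τ X Y R Finset.univ w r (Function.update η i t) =
      (∑ k, pinball τ (r k)) + (t * c i + ∑ k ∈ Finset.univ.erase i, η k * c k) + R w := by
    intro t
    simp only [LagrS]
    rw [sum_update_eq' (fun k x => x * c k) η i t]
  have hLη : LagrS τ X Y R Finset.univ w r η =
      (∑ k, pinball τ (r k)) + (η i * c i + ∑ k ∈ Finset.univ.erase i, η k * c k) + R w := by
    conv_lhs => rw [← Function.update_eq_self i η]
    exact hL (η i)
  have hci : c i = 0 := by
    have h1 := hs.2 (Function.update η i (η i + 1))
    have h2 := hs.2 (Function.update η i (η i - 1))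
    rw [hL, hLη] at h1 h2
    nlinarith
  have hri : r i = 0 := by
    have h := hs.1 w (Function.update r i 0)
    have e1 : LagrS τ X Y R Finset.univ w (Function.update r i 0) η =
        (pinball τ 0 + ∑ k ∈ Finset.univ.erase i, pinball τ (r k)) +
        (η i * (Y i - (∑ j, X i j * w j) - 0) +
          ∑ k ∈ Finset.univ.erase i, η k * c k) + R w := by
      simp only [LagrS]
      rw [sum_update_eq' (fun k x => pinball τ x) r i 0,
        sum_update_eq' (fun k x => η k * (Y k - (∑ j, X k j * w j) - x)) r i 0]
    have e2 : LagrS τ X Y R Finset.univ w r η =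
        (pinball τ (r i) + ∑ k ∈ Finset.univ.erase i, pinball τ (r k)) +
        (η i * c i + ∑ k ∈ Finset.univ.erase i, η k * c k) + R w := by
      simp only [LagrS]
      rw [← Finset.add_sum_erase _ (fun k => pinball τ (r k)) (Finset.mem_univ i),
        ← Finset.add_sum_erase _ (fun k => η k * c k) (Finset.mem_univ i)]
    rw [e1, e2] at h
    have hp0 : pinball τ (0 : ℝ) = 0 := by simp [pinball]
    have hple : pinball τ (r i) ≤ η i * r i := by
      have : Y i - (∑ j, X i j * w j) - 0 = c i + r i := by simp only [hc]; ring
      rw [this, hp0] at h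
      nlinarith [h]
    exact eq_zero_of_pinball_le' (hint i).1 (hint i).2 hple
  have := hci
  simp only [hc, hri] at this
  linarith

/-! ### Linear-algebraic construction: recovering an interpolated response from the others -/

/-- The Gram matrix of the covariate rows indexed by `S`. -/
def gramS {n p : ℕ} (S : Finset (Fin n)) (v : Fin n → (Fin p → ℝ) × ℝ) : Matrix S S ℝ :=
  Matrix.of fun k l => ∑ j, (v (k : Fin n)).1 j * (v (l : Fin n)).1 j

/-- The value of the response predicted from the responses indexed by `S`, using the
normal-equation coefficients expressing `a` in terms of the covariate rows indexed by `S`. -/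
def hfun {n p : ℕ} (S : Finset (Fin n)) (a : Fin p → ℝ) (v : Fin n → (Fin p → ℝ) × ℝ) : ℝ :=
  ∑ k : S, ((gramS S v)⁻¹.mulVec fun l : S => ∑ j, (v (l : Fin n)).1 j * a j) k
    * (v (k : Fin n)).2

private lemma hfun_eq' {n p : ℕ} (S : Finset (Fin n)) (a : Fin p → ℝ) (bi : ℝ)
    (v : Fin n → (Fin p → ℝ) × ℝ) (w : Fin p → ℝ)
    (hind : LinearIndependent ℝ fun k : S => (v (k : Fin n)).1)
    (d : S → ℝ) (hd : ∀ j, a j = ∑ k : S, d k * (v (k : Fin n)).1 j)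
    (hb : ∀ k : S, (v (k : Fin n)).2 = ∑ j, (v (k : Fin n)).1 j * w j)
    (hbi : bi = ∑ j, a j * w j) :
    bi = hfun S a v := by
  set G := gramS S v with hG
  have hGd : G.mulVec d = fun k : S => ∑ j, (v (k : Fin n)).1 j * a j := by
    funext k
    simp only [Matrix.mulVec, dotProduct, hG, gramS, Matrix.of_apply]
    simp_rw [Finset.sum_mul]
    rw [Finset.sum_comm]
    refine Finset.sum_congr rfl fun j _ => ?_
    rw [hd j, Finset.mul_sum]
    exact Finset.sum_congr rfl fun l _ => by ring
  have hdet : IsUnit G.det := by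
    rw [isUnit_iff_ne_zero]
    intro h0
    obtain ⟨u, hu, hGu⟩ := (Matrix.exists_mulVec_eq_zero_iff).mpr h0
    have h2 : ∀ k : S, ∑ j, (v (k : Fin n)).1 j * (∑ l : S, u l * (v (l : Fin n)).1 j) = 0 := by
      intro k
      have hk := congrFun hGu k
      simp only [Matrix.mulVec, dotProduct, Pi.zero_apply, gramS, hG,
        Matrix.of_apply] at hk
      rw [← hk]
      simp_rw [Finset.mul_sum]
      rw [Finset.sum_comm]
      refine Finset.sum_congr rfl fun l _ => ?_
      rw [Finset.sum_mul]
      exact Finset.sum_congr rfl fun j _ => by ring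
    have hquad : ∑ j, (∑ k : S, u k * (v (k : Fin n)).1 j) ^ 2 = 0 := by
      calc ∑ j, (∑ k : S, u k * (v (k : Fin n)).1 j) ^ 2
          = ∑ j, ∑ k : S, u k * ((v (k : Fin n)).1 j * (∑ l : S, u l * (v (l : Fin n)).1 j)) := by
            refine Finset.sum_congr rfl fun j _ => ?_
            rw [sq, Finset.sum_mul]
            exact Finset.sum_congr rfl fun k _ => by ring
        _ = ∑ k : S, u k * ∑ j, (v (k : Fin n)).1 j * (∑ l : S, u l * (v (l : Fin n)).1 j) := by
            rw [Finset.sum_comm]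
            exact Finset.sum_congr rfl fun k _ => (Finset.mul_sum _ _ _).symm
        _ = 0 := Finset.sum_eq_zero fun k _ => by rw [h2 k, mul_zero]
    have hzero : ∀ j, ∑ k : S, u k * (v (k : Fin n)).1 j = 0 := fun j =>
      sq_eq_zero_iff.mp <|
        (Finset.sum_eq_zero_iff_of_nonneg fun j _ => sq_nonneg _).mp hquad j (Finset.mem_univ j)
    refine hu (funext fun k => ?_)
    refine Fintype.linearIndependent_iff.mp hind u ?_ k
    funext j
    simpa [Finset.sum_apply] using hzero j
  have hinv : (G⁻¹).mulVec (G.mulVec d) = d := by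
    rw [Matrix.mulVec_mulVec, Matrix.nonsing_inv_mul _ hdet, Matrix.one_mulVec]
  have hval : hfun S a v = ∑ k : S, d k * (v (k : Fin n)).2 := by
    unfold hfun
    rw [← hG, ← hGd, hinv]
  rw [hval, hbi]
  calc ∑ j, a j * w j
      = ∑ j, (∑ k : S, d k * (v (k : Fin n)).1 j) * w j := by
        exact Finset.sum_congr rfl fun j _ => by rw [← hd j]
    _ = ∑ k : S, d k * ∑ j, (v (k : Fin n)).1 j * w j := by
        simp_rw [Finset.sum_mul]
        rw [Finset.sum_comm]
        refine Finset.sum_congr rfl fun k _ => ?_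
        rw [Finset.mul_sum]
        exact Finset.sum_congr rfl fun j _ => by ring
    _ = ∑ k : S, d k * (v (k : Fin n)).2 := Finset.sum_congr rfl fun k _ => by rw [hb k]

/-- If `p < n` and some `w` interpolates all data, then some response value is recovered
from the others by `hfun`. -/
private lemma coverage' {n p : ℕ} (hpn : p < n) (a : Fin n → Fin p → ℝ) (b : Fin n → ℝ)
    (w : Fin p → ℝ) (hw : ∀ i, b i = ∑ j, a i j * w j) :
    ∃ (i : Fin n) (S : Finset (Fin n)),
      b i = hfun S (a i)
        (fun k => if k ∈ Finset.univ.erase i then (a k, b k) else 0) := by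
  have hn0 : 0 < n := lt_of_le_of_lt (Nat.zero_le p) hpn
  obtain ⟨t, hts, htsp, hti⟩ := exists_linearIndependent ℝ (Set.range a)
  have hfin : t.Finite := hti.setFinite
  have hsel : ∀ x ∈ t, ∃ k : Fin n, a k = x := fun x hx => hts hx
  classical
  let g : (Fin p → ℝ) → Fin n := fun x =>
    if h : ∃ k : Fin n, a k = x then h.choose else ⟨0, hn0⟩
  have hg : ∀ x ∈ t, a (g x) = x := by
    intro x hx
    have h : ∃ k : Fin n, a k = x := hsel x hx
    simp only [g, dif_pos h]
    exact h.choose_spec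
  let S : Finset (Fin n) := (hfin.toFinset).image g
  have haS : ∀ k ∈ S, a k ∈ t := by
    intro k hk
    obtain ⟨x, hx, rfl⟩ := Finset.mem_image.mp hk
    rw [hg x (hfin.mem_toFinset.mp hx)]
    exact hfin.mem_toFinset.mp hx
  have hinj : ∀ k ∈ S, ∀ k' ∈ S, a k = a k' → k = k' := by
    intro k hk k' hk'
    obtain ⟨x, hx, rfl⟩ := Finset.mem_image.mp hk
    obtain ⟨x', hx', rfl⟩ := Finset.mem_image.mp hk'
    rw [hg x (hfin.mem_toFinset.mp hx), hg x' (hfin.mem_toFinset.mp hx')]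
    intro h; rw [h]
  have htS : t = a '' S := by
    apply Set.Subset.antisymm
    · intro x hx
      refine ⟨g x, ?_, hg x hx⟩
      exact Finset.mem_image_of_mem g (hfin.mem_toFinset.mpr hx)
    · rintro - ⟨k, hk, rfl⟩
      exact haS k hk
  have hindA : LinearIndependent ℝ fun k : S => a (k : Fin n) := by
    have e : (fun k : S => a (k : Fin n)) =
        ((↑) : t → (Fin p → ℝ)) ∘ (fun k : S => (⟨a k, haS k k.2⟩ : t)) := rfl
    rw [e]
    exact hti.comp _ (fun k k' hkk' => Subtype.ext
      (hinj k k.2 k' k'.2 (congrArg Subtype.val hkk')))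
  have hScard : S.card ≤ p := by
    have h2 := hindA.fintype_card_le_finrank
    simpa [Module.finrank_fin_fun, Fintype.card_coe] using h2
  obtain ⟨i, hiS⟩ : ∃ i : Fin n, i ∉ S := by
    by_contra h
    push_neg at h
    have : S = Finset.univ := Finset.eq_univ_of_forall h
    rw [this] at hScard
    simp at hScard
    omega
  refine ⟨i, S, ?_⟩
  set v : Fin n → (Fin p → ℝ) × ℝ :=
    fun k => if k ∈ Finset.univ.erase i then (a k, b k) else 0 with hv
  have hvk : ∀ k : S, v (k : Fin n) = (a k, b k) := by
    intro k
    have hki : (k : Fin n) ≠ i := fun h => hiS (h ▸ k.2)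
    simp [hv, hki]
  have hindS : LinearIndependent ℝ fun k : S => (v (k : Fin n)).1 := by
    have : (fun k : S => (v (k : Fin n)).1) = fun k : S => a (k : Fin n) := by
      funext k; rw [hvk k]
    rw [this]
    exact hindA
  have hmem : a i ∈ Submodule.span ℝ (Set.range fun k : S => (v (k : Fin n)).1) := by
    have h1 : a i ∈ Submodule.span ℝ (Set.range a) :=
      Submodule.subset_span (Set.mem_range_self i)
    rw [← htsp] at h1
    have h2 : Set.range (fun k : S => (v (k : Fin n)).1) = t := by
      rw [htS]
      ext x
      constructor
      · rintro ⟨k, rfl⟩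
        refine ⟨k, k.2, ?_⟩
        show a (k : Fin n) = (v (k : Fin n)).1
        rw [hvk k]
      · rintro ⟨k, hk, rfl⟩
        refine ⟨⟨k, hk⟩, ?_⟩
        show (v k).1 = a k
        rw [hvk ⟨k, hk⟩]
    rw [h2]
    exact h1
  obtain ⟨d, hd⟩ := (Submodule.mem_span_range_iff_exists_fun ℝ).mp hmem
  refine hfun_eq' S (a i) (b i) v w hindS d ?_ ?_ (hw i)
  · intro j
    have := congrFun hd j
    simp only [Finset.sum_apply, Pi.smul_apply, smul_eq_mul] at this
    exact this.symm
  · intro k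
    rw [hvk k]
    simpa using hw k

/-! ### Measurability of `hfun` -/

private lemma measurable_det' {α : Type*} [MeasurableSpace α] {ι : Type*} [Fintype ι]
    [DecidableEq ι] {M : α → Matrix ι ι ℝ}
    (hM : ∀ i j, Measurable fun x => M x i j) : Measurable fun x => (M x).det := by
  simp_rw [Matrix.det_apply]
  refine Finset.measurable_sum _ fun σ _ => ?_
  have : Measurable fun x => ∏ i, M x (σ i) i :=
    Finset.measurable_prod _ fun i _ => hM (σ i) i
  exact this.const_smul (Equiv.Perm.sign σ)

private lemma measurable_inv_entry' {α : Type*} [MeasurableSpace α] {ι : Type*} [Fintype ι]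
    [DecidableEq ι] {M : α → Matrix ι ι ℝ}
    (hM : ∀ i j, Measurable fun x => M x i j) (i j : ι) :
    Measurable fun x => (M x)⁻¹ i j := by
  simp_rw [Matrix.inv_def, Matrix.smul_apply, Ring.inverse_eq_inv', smul_eq_mul]
  refine Measurable.mul ((measurable_det' hM).inv) ?_
  simp_rw [Matrix.adjugate_apply]
  refine measurable_det' fun k l => ?_
  simp_rw [Matrix.updateRow_apply]
  by_cases hk : k = j
  · simp only [hk, if_pos rfl]
    exact measurable_const
  · simp only [if_neg hk]
    exact hM k l

private lemma measurable_hfun' {n p : ℕ} (S : Finset (Fin n)) :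
    Measurable fun q : (Fin p → ℝ) × (Fin n → (Fin p → ℝ) × ℝ) => hfun S q.1 q.2 := by
  have hv1 : ∀ (k : Fin n) (j : Fin p),
      Measurable fun q : (Fin p → ℝ) × (Fin n → (Fin p → ℝ) × ℝ) => (q.2 k).1 j :=
    fun k j => (measurable_pi_apply j).comp
      (measurable_fst.comp ((measurable_pi_apply k).comp measurable_snd))
  have hv2 : ∀ k : Fin n,
      Measurable fun q : (Fin p → ℝ) × (Fin n → (Fin p → ℝ) × ℝ) => (q.2 k).2 :=
    fun k => measurable_snd.comp ((measurable_pi_apply k).comp measurable_snd)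
  have ha : ∀ j : Fin p,
      Measurable fun q : (Fin p → ℝ) × (Fin n → (Fin p → ℝ) × ℝ) => q.1 j :=
    fun j => (measurable_pi_apply j).comp measurable_fst
  have hG : ∀ k l : S, Measurable fun q : (Fin p → ℝ) × (Fin n → (Fin p → ℝ) × ℝ) =>
      gramS S q.2 k l := by
    intro k l
    simp only [gramS, Matrix.of_apply]
    exact Finset.measurable_sum _ fun j _ => (hv1 k j).mul (hv1 l j)
  unfold hfun
  refine Finset.measurable_sum _ fun k _ => Measurable.mul ?_ (hv2 k)
  simp_rw [Matrix.mulVec, dotProduct]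
  refine Finset.measurable_sum _ fun l _ => Measurable.mul ?_ ?_
  · exact measurable_inv_entry' hG k l
  · exact Finset.measurable_sum _ fun j _ => (hv1 l j).mul (ha j)

/-! ### Probabilistic lemmas -/

private lemma L0' {Ω : Type*} [MeasurableSpace Ω] (μ : Measure Ω) [IsProbabilityMeasure μ]
    {p : ℕ} {A : Ω → Fin p → ℝ} {B : Ω → ℝ} (hA : Measurable A) (hB : Measurable B)
    (hc : ∀ᵐ x ∂(μ.map A), ∀ y : ℝ, condDistrib B A μ x {y} = 0)
    {f : (Fin p → ℝ) → ℝ} (hf : Measurable f) :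
    (μ.map fun ω => (A ω, B ω)) {q | q.2 = f q.1} = 0 := by
  set ρ := μ.map fun ω => (A ω, B ω) with hρdef
  haveI : IsProbabilityMeasure ρ := Measure.isProbabilityMeasure_map (hA.prodMk hB).aemeasurable
  have hdis : ρ.fst ⊗ₘ ρ.condKernel = ρ := ρ.disintegrate ρ.condKernel
  have hfst : ρ.fst = μ.map A := Measure.fst_map_prodMk hB
  have hs : MeasurableSet {q : (Fin p → ℝ) × ℝ | q.2 = f q.1} :=
    measurableSet_eq_fun measurable_snd (hf.comp measurable_fst)
  rw [← hdis, Measure.compProd_apply hs]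
  have hker : ρ.condKernel = condDistrib B A μ := by rw [condDistrib]
  rw [hfst]
  have : ∀ᵐ x ∂(μ.map A),
      ρ.condKernel x (Prod.mk x ⁻¹' {q : (Fin p → ℝ) × ℝ | q.2 = f q.1}) = 0 := by
    filter_upwards [hc] with x hx
    have : Prod.mk x ⁻¹' {q : (Fin p → ℝ) × ℝ | q.2 = f q.1} = {f x} := by
      ext y; simp [Set.mem_preimage]
    rw [this, hker]
    exact hx (f x)
  rw [lintegral_congr_ae this, lintegral_zero]

private lemma L1' {Ω : Type*} [MeasurableSpace Ω] (μ : Measure Ω) [IsProbabilityMeasure μ]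
    {p : ℕ} {F : Type*} [MeasurableSpace F]
    {A : Ω → Fin p → ℝ} {B : Ω → ℝ} {W : Ω → F}
    (hA : Measurable A) (hB : Measurable B) (hW : Measurable W)
    (hind : IndepFun (fun ω => (A ω, B ω)) W μ)
    (hc : ∀ᵐ x ∂(μ.map A), ∀ y : ℝ, condDistrib B A μ x {y} = 0)
    {h : (Fin p → ℝ) → F → ℝ} (hh : Measurable fun q : (Fin p → ℝ) × F => h q.1 q.2) :
    μ {ω | B ω = h (A ω) (W ω)} = 0 := by
  have hpair : Measurable fun ω => (A ω, B ω) := hA.prodMk hB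
  have hmap : μ.map (fun ω => (W ω, (A ω, B ω))) =
      (μ.map W).prod (μ.map fun ω => (A ω, B ω)) :=
    (indepFun_iff_map_prod_eq_prod_map_map hW.aemeasurable hpair.aemeasurable).mp hind.symm
  set s : Set (F × ((Fin p → ℝ) × ℝ)) := {q | q.2.2 = h q.2.1 q.1} with hsdef
  have hs : MeasurableSet s :=
    measurableSet_eq_fun (measurable_snd.comp measurable_snd)
      (hh.comp ((measurable_fst.comp measurable_snd).prodMk measurable_fst))
  have h1 : μ {ω | B ω = h (A ω) (W ω)} =
      (μ.map fun ω => (W ω, (A ω, B ω))) s := by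
    rw [Measure.map_apply (hW.prodMk hpair) hs]
    rfl
  rw [h1, hmap, Measure.prod_apply hs]
  haveI : IsProbabilityMeasure (μ.map fun ω => (A ω, B ω)) :=
    Measure.isProbabilityMeasure_map hpair.aemeasurable
  have : ∀ w : F, (μ.map fun ω => (A ω, B ω)) (Prod.mk w ⁻¹' s) = 0 := by
    intro w
    have hpre : Prod.mk w ⁻¹' s = {q : (Fin p → ℝ) × ℝ | q.2 = (fun a => h a w) q.1} := rfl
    rw [hpre]
    exact L0' μ hA hB hc (hh.comp (measurable_id.prodMk measurable_const))
  simp_rw [this]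
  simp

/-! ### Main theorem -/

theorem interior_dual_coordinates_lt_n
    {Ω : Type*} [MeasurableSpace Ω] (μ : Measure Ω) [IsProbabilityMeasure μ]
    {n p : ℕ} (τ : ℝ) (hτ : τ ∈ Set.Ioo (0 : ℝ) 1)
    (X Z ξ : Ω → Fin n → Fin p → ℝ) (Y : Ω → Fin n → ℝ)
    (hXmeas : Measurable X) (hYmeas : Measurable Y)
    (hZmeas : Measurable Z) (hξmeas : Measurable ξ)
    (hindep : iIndepFun (fun i ω => (X ω i, Y ω i)) μ)
    (hident : ∀ i j : Fin n,
      IdentDistrib (fun ω => (X ω i, Y ω i)) (fun ω => (X ω j, Y ω j)) μ μ)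
    (hcond : ∀ i : Fin n, ∀ᵐ x ∂(μ.map fun ω => X ω i),
      ∀ y : ℝ, condDistrib (fun ω => Y ω i) (fun ω => X ω i) μ x {y} = 0)
    (lam : Fin p → ℝ) (hlam : ∀ j, 0 ≤ lam j)
    (R : (Fin p → ℝ) → ℝ) (hR : R = fun w => ∑ j, lam j * w j ^ 2)
    (hdecomp : ∀ ω i j, X ω i j = Z ω i j + ξ ω i j)
    (hξindep : ∀ i : Fin n, IndepFun (fun ω => ξ ω i) (fun ω => (Z ω i, Y ω i)) μ)
    (hξentries : ∀ i : Fin n, iIndepFun (fun j ω => ξ ω i j) μ)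
    (hξcont : ∀ (i : Fin n) (j : Fin p) (y : ℝ), μ {ω | ξ ω i j = y} = 0)
    (hpn : p < n)
    (hsaddle : ∀ᵐ ω ∂μ,
      (∃ w r η, IsSaddleS τ (X ω) (Y ω) R Finset.univ w r η) ∧
      ∀ i : Fin n, ∃ w r η, IsSaddleS τ (X ω) (Y ω) R (Finset.univ.erase i) w r η) :
    ∀ᵐ ω ∂μ, ∀ η, IsDualSolS τ (X ω) (Y ω) R Finset.univ η →
      Nat.card {i : Fin n // -(1 - τ) < η i ∧ η i < τ} < n := by
  classical
  -- the random vector of all samples except `i` (with slot `i` zeroed out)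
  set W : Fin n → Ω → Fin n → (Fin p → ℝ) × ℝ :=
    fun i ω k => if k ∈ Finset.univ.erase i then (X ω k, Y ω k) else 0 with hWdef
  have hVmeas : ∀ k : Fin n, Measurable fun ω => (X ω k, Y ω k) := fun k =>
    ((measurable_pi_apply k).comp hXmeas).prodMk ((measurable_pi_apply k).comp hYmeas)
  -- each "recovery" event is null
  have hnull : ∀ (i : Fin n) (S : Finset (Fin n)),
      μ {ω | Y ω i = hfun S (X ω i) (W i ω)} = 0 := by
    intro i S
    -- the function rebuilding the zeroed family from the restricted one
    set E := Finset.univ.erase i with hE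
    set ψ : ({k : Fin n // k ∈ E} → (Fin p → ℝ) × ℝ) → Fin n → (Fin p → ℝ) × ℝ :=
      fun g k => if hk : k ∈ E then g ⟨k, hk⟩ else 0 with hψ
    have hψmeas : Measurable ψ := by
      refine measurable_pi_lambda _ fun k => ?_
      by_cases hk : k ∈ E
      · simp only [hψ, dif_pos hk]
        exact measurable_pi_apply _
      · simp only [hψ, dif_neg hk]
        exact measurable_const
    have hrestmeas : Measurable fun ω (k : {k : Fin n // k ∈ E}) => (X ω k, Y ω k) :=
      measurable_pi_lambda _ fun k => hVmeas k
    have hWeq : (ψ ∘ fun ω (k : {k : Fin n // k ∈ E}) => (X ω (k : Fin n), Y ω (k : Fin n)))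
        = W i := by
      funext ω
      funext k
      by_cases hk : k ∈ E
      · simp [hψ, hWdef, hE, dif_pos hk, hk]
      · simp [hψ, hWdef, hE, dif_neg hk, hk]
    have hWmeas : Measurable (W i) := by
      rw [← hWeq]
      exact hψmeas.comp hrestmeas
    have hindW : IndepFun (fun ω => (X ω i, Y ω i)) (W i) μ := by
      have hdisj : Disjoint ({i} : Finset (Fin n)) E := by
        simp [hE]
      have h1 := hindep.indepFun_finset {i} E hdisj hVmeas
      have h2 := h1.comp
        (measurable_pi_apply (⟨i, Finset.mem_singleton_self i⟩ : {k : Fin n // k ∈ ({i} : Finset (Fin n))}))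
        hψmeas
      rw [hWeq] at h2
      exact h2
    exact L1' μ ((measurable_pi_apply i).comp hXmeas) ((measurable_pi_apply i).comp hYmeas)
      hWmeas hindW (hcond i) (measurable_hfun' S)
  -- almost surely no recovery event happens
  have hae : ∀ᵐ ω ∂μ, ∀ (i : Fin n) (S : Finset (Fin n)),
      ¬ (Y ω i = hfun S (X ω i) (W i ω)) := by
    rw [ae_all_iff]
    intro i
    rw [ae_all_iff]
    intro S
    have := hnull i S
    rw [← compl_compl {ω | Y ω i = hfun S (X ω i) (W i ω)}] at this
    exact (ae_iff.mpr (by simpa using hnull i S))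
  filter_upwards [hae] with ω hω η hη
  obtain ⟨w, r, hs⟩ := hη
  by_contra hcard
  push_neg at hcard
  have hall : ∀ i : Fin n, -(1 - τ) < η i ∧ η i < τ := by
    intro i
    by_contra hPi
    have hsub : Finset.univ.filter (fun k => -(1 - τ) < η k ∧ η k < τ) ⊆
        Finset.univ.erase i := by
      intro k hk
      rw [Finset.mem_filter] at hk
      refine Finset.mem_erase.mpr ⟨?_, Finset.mem_univ k⟩
      rintro rfl
      exact hPi hk.2
    have hle : Nat.card {k : Fin n // -(1 - τ) < η k ∧ η k < τ} ≤
        (Finset.univ.erase i).card := by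
      rw [Nat.card_eq_fintype_card, Fintype.card_subtype]
      exact Finset.card_le_card hsub
    rw [Finset.card_erase_of_mem (Finset.mem_univ i), Finset.card_univ, Fintype.card_fin] at hle
    omega
  have hinterp : ∀ i : Fin n, Y ω i = ∑ j, X ω i j * w j :=
    fun i => saddle_interp' hs hall i
  obtain ⟨i, S, hiS⟩ := coverage' hpn (X ω) (Y ω) w hinterp
  exact hω i S hiS

end
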